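/- Let x₁ ≤ ⋯ ≤ xₙ be agent locations, let f ∈ ℝ and y* > f with no agent in the open interval (f, y*). For groups G₁, …, Gₘ with positive weights wⱼ, if max_j wⱼ·Lⱼ(f) ≥ max_j wⱼ·Rⱼ(f) and max_j wⱼ·Lⱼ(f) > 0, then max_j wⱼ·Σ_{i∈Gⱼ}|f − xᵢ| − max_j wⱼ·Σ_{i∈Gⱼ}|y* − xᵢ| ≤ max_j wⱼ·Lⱼ(f)·(y* − f) ≤ max_j wⱼ·Σ_{i∈Gⱼ}|y* − xᵢ|. -/

import Mathlib

theorem stmt14 (n m : ℕ) (x : Fin n → ℝ) (hx : Monotone x)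
    (G : Fin m → Finset (Fin n)) (w : Fin m → ℝ) (hw : ∀ j, 0 < w j)
    (hM : (Finset.univ : Finset (Fin m)).Nonempty)
    (f ystar : ℝ) (hfy : f < ystar)
    (hgap : ∀ i : Fin n, ¬ (f < x i ∧ x i < ystar))
    (hbal : Finset.univ.sup' hM
        (fun j => w j * (((G j).filter (fun i => f < x i)).card : ℝ))
      ≤ Finset.univ.sup' hM
        (fun j => w j * (((G j).filter (fun i => x i ≤ f)).card : ℝ)))
    (hpos : 0 < Finset.univ.sup' hM
        (fun j => w j * (((G j).filter (fun i => x i ≤ f)).card : ℝ))) :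
    Finset.univ.sup' hM (fun j => w j * ∑ i ∈ G j, |f - x i|)
        - Finset.univ.sup' hM (fun j => w j * ∑ i ∈ G j, |ystar - x i|)
      ≤ Finset.univ.sup' hM
          (fun j => w j * (((G j).filter (fun i => x i ≤ f)).card : ℝ)) * (ystar - f) ∧
    Finset.univ.sup' hM
        (fun j => w j * (((G j).filter (fun i => x i ≤ f)).card : ℝ)) * (ystar - f)
      ≤ Finset.univ.sup' hM (fun j => w j * ∑ i ∈ G j, |ystar - x i|) := by
  have hyf : (0:ℝ) ≤ ystar - f := by linarith
  constructor
  · obtain ⟨j, -, hj⟩ := Finset.exists_mem_eq_sup' hM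
      (fun j => w j * ∑ i ∈ G j, |f - x i|)
    rw [hj]
    have h1 : w j * ∑ i ∈ G j, |ystar - x i|
        ≤ Finset.univ.sup' hM (fun j => w j * ∑ i ∈ G j, |ystar - x i|) :=
      Finset.le_sup' (fun j => w j * ∑ i ∈ G j, |ystar - x i|) (Finset.mem_univ j)
    have h2 : w j * (((G j).filter (fun i => f < x i)).card : ℝ)
        ≤ Finset.univ.sup' hM
          (fun j => w j * (((G j).filter (fun i => x i ≤ f)).card : ℝ)) :=
      le_trans (Finset.le_sup' (fun j => w j * (((G j).filter (fun i => f < x i)).card : ℝ)) (Finset.mem_univ j)) hbal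
    have key : ∑ i ∈ G j, (|f - x i| - |ystar - x i|)
        ≤ (((G j).filter (fun i => f < x i)).card : ℝ) * (ystar - f) := by
      rw [← Finset.sum_filter_add_sum_filter_not (G j) (fun i => f < x i)]
      have hA : ∑ i ∈ (G j).filter (fun i => f < x i), (|f - x i| - |ystar - x i|)
          = (((G j).filter (fun i => f < x i)).card : ℝ) * (ystar - f) := by
        rw [Finset.sum_congr rfl (fun i hi => ?_), Finset.sum_const, nsmul_eq_mul]
        simp only [Finset.mem_filter] at hi
        have hy : ystar ≤ x i := by
          by_contra h
          exact hgap i ⟨hi.2, lt_of_not_ge h⟩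
        rw [abs_of_nonpos (by linarith), abs_of_nonpos (by linarith)]
        ring
      have hB : ∑ i ∈ (G j).filter (fun i => ¬ f < x i), (|f - x i| - |ystar - x i|)
          ≤ 0 := by
        apply Finset.sum_nonpos
        intro i hi
        simp only [Finset.mem_filter, not_lt] at hi
        rw [abs_of_nonneg (by linarith), abs_of_nonneg (by linarith)]
        linarith
      rw [hA]
      linarith
    have key' : w j * ∑ i ∈ G j, (|f - x i| - |ystar - x i|)
        ≤ (w j * (((G j).filter (fun i => f < x i)).card : ℝ)) * (ystar - f) := by
      rw [mul_assoc]
      exact mul_le_mul_of_nonneg_left key (le_of_lt (hw j))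
    rw [Finset.sum_sub_distrib, mul_sub] at key'
    have h3 : (w j * (((G j).filter (fun i => f < x i)).card : ℝ)) * (ystar - f)
        ≤ Finset.univ.sup' hM
          (fun j => w j * (((G j).filter (fun i => x i ≤ f)).card : ℝ)) * (ystar - f) :=
      mul_le_mul_of_nonneg_right h2 hyf
    linarith
  · obtain ⟨j, -, hj⟩ := Finset.exists_mem_eq_sup' hM
      (fun j => w j * (((G j).filter (fun i => x i ≤ f)).card : ℝ))
    rw [hj]
    have h1 : (((G j).filter (fun i => x i ≤ f)).card : ℝ) * (ystar - f)
        ≤ ∑ i ∈ G j, |ystar - x i| := by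
      have : (((G j).filter (fun i => x i ≤ f)).card : ℝ) * (ystar - f)
          = ∑ i ∈ (G j).filter (fun i => x i ≤ f), (ystar - f) := by
        rw [Finset.sum_const, nsmul_eq_mul]
      rw [this]
      calc ∑ i ∈ (G j).filter (fun i => x i ≤ f), (ystar - f)
          ≤ ∑ i ∈ (G j).filter (fun i => x i ≤ f), |ystar - x i| := by
            apply Finset.sum_le_sum
            intro i hi
            simp only [Finset.mem_filter] at hi
            rw [abs_of_nonneg (by linarith [hi.2])]
            linarith [hi.2]
        _ ≤ ∑ i ∈ G j, |ystar - x i| :=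
            Finset.sum_le_sum_of_subset_of_nonneg (Finset.filter_subset _ _)
              (fun i _ _ => abs_nonneg _)
    have h2 : w j * ∑ i ∈ G j, |ystar - x i|
        ≤ Finset.univ.sup' hM (fun j => w j * ∑ i ∈ G j, |ystar - x i|) :=
      Finset.le_sup' (fun j => w j * ∑ i ∈ G j, |ystar - x i|) (Finset.mem_univ j)
    have h3 : w j * ((((G j).filter (fun i => x i ≤ f)).card : ℝ) * (ystar - f))
        ≤ w j * ∑ i ∈ G j, |ystar - x i| :=
      mul_le_mul_of_nonneg_left h1 (le_of_lt (hw j))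
    rw [mul_assoc]
    linarith
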